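/- Let X be a real Banach space with dim X ≥ 2. If X is not uniformly non-square, then Ω(X) = 8/5. -/

import Mathlib

/-- The orthogonal geometric constant
`Ω(X) = sup{ (‖x+2y‖² + ‖2x+y‖²)/(5‖x+y‖²) : x, y ∈ S_X, x ⊥_I y }`. -/
noncomputable def OmegaConst (X : Type*) [NormedAddCommGroup X] [NormedSpace ℝ X] : ℝ :=
  sSup { r : ℝ | ∃ x y : X, ‖x‖ = 1 ∧ ‖y‖ = 1 ∧ ‖x + y‖ = ‖x - y‖ ∧
    r = (‖x + (2 : ℝ) • y‖ ^ 2 + ‖(2 : ℝ) • x + y‖ ^ 2) / (5 * ‖x + y‖ ^ 2) }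

/-- `X` is uniformly non-square if there is `δ ∈ (0,1)` such that for all
`x, y ∈ S_X` either `‖x+y‖/2 ≤ 1−δ` or `‖x−y‖/2 ≤ 1−δ`. -/
def UniformlyNonSquare (X : Type*) [NormedAddCommGroup X] [NormedSpace ℝ X] : Prop :=
  ∃ δ : ℝ, 0 < δ ∧ δ < 1 ∧ ∀ x y : X, ‖x‖ = 1 → ‖y‖ = 1 →
    ‖x + y‖ / 2 ≤ 1 - δ ∨ ‖x - y‖ / 2 ≤ 1 - δ

section Aux

variable {X : Type*} [NormedAddCommGroup X] [NormedSpace ℝ X]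

private lemma dual_apply_le (g : X →L[ℝ] ℝ) (hg : ‖g‖ = 1) (z : X) : g z ≤ ‖z‖ := by
  have := g.le_opNorm z
  rw [hg, one_mul, Real.norm_eq_abs] at this
  exact (le_abs_self _).trans this

private lemma omega_upper (x y : X) (hx : ‖x‖ = 1) (hy : ‖y‖ = 1)
    (hxy : ‖x + y‖ = ‖x - y‖) :
    (‖x + (2 : ℝ) • y‖ ^ 2 + ‖(2 : ℝ) • x + y‖ ^ 2) / (5 * ‖x + y‖ ^ 2) ≤ 8 / 5 := by
  have h2 : (2 : ℝ) ≤ ‖x + y‖ + ‖x - y‖ := by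
    have h := norm_add_le (x + y) (x - y)
    have he : (x + y) + (x - y) = (2 : ℝ) • x := by module
    rw [he, norm_smul, hx] at h
    simpa using h
  rw [← hxy] at h2
  have hc : (1 : ℝ) ≤ ‖x + y‖ := by linarith
  have h3 : ‖x + (2 : ℝ) • y‖ ≤ ‖x + y‖ + 1 := by
    have he : x + (2 : ℝ) • y = (x + y) + y := by module
    rw [he]
    calc ‖(x + y) + y‖ ≤ ‖x + y‖ + ‖y‖ := norm_add_le _ _
      _ = ‖x + y‖ + 1 := by rw [hy]
  have h4 : ‖(2 : ℝ) • x + y‖ ≤ ‖x + y‖ + 1 := by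
    have he : (2 : ℝ) • x + y = (x + y) + x := by module
    rw [he]
    calc ‖(x + y) + x‖ ≤ ‖x + y‖ + ‖x‖ := norm_add_le _ _
      _ = ‖x + y‖ + 1 := by rw [hx]
  have hpos : (0 : ℝ) < 5 * ‖x + y‖ ^ 2 := by positivity
  rw [div_le_iff₀ hpos]
  have n1 : (0 : ℝ) ≤ ‖x + (2 : ℝ) • y‖ := norm_nonneg _
  have n2 : (0 : ℝ) ≤ ‖(2 : ℝ) • x + y‖ := norm_nonneg _
  nlinarith [sq_nonneg (‖x + y‖ - 1), mul_le_mul h3 h3 n1 (by linarith),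
    mul_le_mul h4 h4 n2 (by linarith)]

private lemma exists_iso_aux {ε : ℝ} (hε : 0 < ε) (hε2 : ε < 1 / 2)
    {u v : X} (hu : ‖u‖ = 1) (hv : ‖v‖ = 1)
    (h2 : 2 - ε ≤ ‖u - v‖)
    (hle : ‖u - v‖ ≤ ‖u + v‖) :
    ∃ w : X, ‖w‖ = 1 ∧ ‖u + w‖ = ‖u - w‖ ∧ 2 - 2 * ε ≤ ‖u + w‖ := by
  have huv : u - v ≠ 0 := by
    intro h0
    rw [h0, norm_zero] at h2; linarith
  obtain ⟨g, hg1, hg2⟩ := exists_dual_vector ℝ (u - v) (norm_ne_zero_iff.mpr huv)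
  have hgsub : g u - g v = ‖u - v‖ := by
    rw [← map_sub]; exact_mod_cast hg2
  have hgu1 : g u ≤ 1 := by simpa [hu] using dual_apply_le g hg1 u
  have hgv1 : -(g v) ≤ 1 := by simpa [hv] using dual_apply_le g hg1 (-v)
  have hgu : 1 - ε ≤ g u := by linarith
  have hgv : 1 - ε ≤ -(g v) := by linarith
  set c : ℝ → X := fun t => (1 - t) • v - t • u with hcdef
  have hgc : ∀ t ∈ Set.Icc (0 : ℝ) 1, 1 - ε ≤ -(g (c t)) := by
    intro t ht
    obtain ⟨ht0, ht1⟩ := ht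
    have hgct : g (c t) = (1 - t) * g v - t * g u := by
      simp [hcdef, map_sub, map_smul, smul_eq_mul]
    rw [hgct]
    nlinarith
  have hnlb : ∀ t ∈ Set.Icc (0 : ℝ) 1, 1 - ε ≤ ‖c t‖ := by
    intro t ht
    have h1 := hgc t ht
    have h2' : g (-(c t)) ≤ ‖-(c t)‖ := dual_apply_le g hg1 _
    rw [map_neg, norm_neg] at h2'
    linarith
  have hnpos : ∀ t ∈ Set.Icc (0 : ℝ) 1, 0 < ‖c t‖ := by
    intro t ht
    have := hnlb t ht; linarith
  have hnub : ∀ t ∈ Set.Icc (0 : ℝ) 1, ‖c t‖ ≤ 1 := by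
    intro t ht
    obtain ⟨ht0, ht1⟩ := ht
    calc ‖c t‖ ≤ ‖(1 - t) • v‖ + ‖t • u‖ := norm_sub_le _ _
      _ = |1 - t| + |t| := by
          rw [norm_smul, norm_smul, hu, hv, Real.norm_eq_abs, Real.norm_eq_abs]; ring
      _ = 1 := by rw [abs_of_nonneg (by linarith), abs_of_nonneg ht0]; ring
  set w : ℝ → X := fun t => ‖c t‖⁻¹ • c t with hwdef
  have hwnorm : ∀ t ∈ Set.Icc (0 : ℝ) 1, ‖w t‖ = 1 := by
    intro t ht
    have hp := hnpos t ht
    rw [hwdef]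
    simp only [norm_smul, Real.norm_eq_abs, abs_of_pos (inv_pos.mpr hp)]
    exact inv_mul_cancel₀ (ne_of_gt hp)
  have key : ∀ t ∈ Set.Icc (0 : ℝ) 1, 2 - 2 * ε ≤ ‖u - w t‖ := by
    intro t ht
    have hp := hnpos t ht
    have hub := hnub t ht
    have hge := hgc t ht
    have hi1 : 1 ≤ ‖c t‖⁻¹ := by
      rw [le_inv_comm₀ one_pos hp]; simpa using hub
    have hgval : g (u - w t) = g u + ‖c t‖⁻¹ * (-(g (c t))) := by
      simp only [hwdef, map_sub, map_smul, smul_eq_mul]; ring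
    have hlow : 2 - 2 * ε ≤ g (u - w t) := by
      rw [hgval]
      nlinarith
    have := dual_apply_le g hg1 (u - w t)
    linarith
  have hcc : Continuous c := by
    simp only [hcdef]
    fun_prop
  have hwc : ContinuousOn w (Set.Icc (0 : ℝ) 1) := by
    apply ContinuousOn.smul
    · exact (hcc.norm.continuousOn).inv₀ fun t ht => ne_of_gt (hnpos t ht)
    · exact hcc.continuousOn
  set f : ℝ → ℝ := fun t => ‖u + w t‖ - ‖u - w t‖ with hfdef
  have hfc : ContinuousOn f (Set.Icc (0 : ℝ) 1) := by
    apply ContinuousOn.sub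
    · exact (continuousOn_const.add hwc).norm
    · exact (continuousOn_const.sub hwc).norm
  have hc0 : c 0 = v := by simp [hcdef]
  have hc1 : c 1 = -u := by simp [hcdef]
  have hw0 : w 0 = v := by rw [hwdef]; simp [hc0, hv]
  have hw1 : w 1 = -u := by rw [hwdef]; simp [hc1, hu]
  have hf0 : f 0 = ‖u + v‖ - ‖u - v‖ := by simp [hfdef, hw0]
  have hf1 : f 1 = -2 := by
    have e1 : u + -u = (0 : X) := by abel
    have e2 : u - -u = (2 : ℝ) • u := by module
    rw [hfdef]
    simp only [hw1, e1, e2, norm_zero, norm_smul, hu, Real.norm_eq_abs]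
    norm_num
  have hmem : (0 : ℝ) ∈ Set.Icc (f 1) (f 0) := by
    constructor
    · rw [hf1]; norm_num
    · rw [hf0]; linarith
  obtain ⟨t, ht, hft⟩ := intermediate_value_Icc' zero_le_one hfc hmem
  have heq : ‖u + w t‖ = ‖u - w t‖ := by
    have : ‖u + w t‖ - ‖u - w t‖ = 0 := hft
    linarith
  exact ⟨w t, hwnorm t ht, heq, heq ▸ key t ht⟩

private lemma exists_iso {ε : ℝ} (hε : 0 < ε) (hε2 : ε < 1 / 2)
    {u v : X} (hu : ‖u‖ = 1) (hv : ‖v‖ = 1)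
    (h1 : 2 - ε ≤ ‖u + v‖) (h2 : 2 - ε ≤ ‖u - v‖) :
    ∃ w : X, ‖w‖ = 1 ∧ ‖u + w‖ = ‖u - w‖ ∧ 2 - 2 * ε ≤ ‖u + w‖ := by
  rcases le_total (‖u - v‖) (‖u + v‖) with hle | hle
  · exact exists_iso_aux hε hε2 hu hv h2 hle
  · have hv' : ‖-v‖ = 1 := by rw [norm_neg]; exact hv
    have e1 : u - -v = u + v := by abel
    have e2 : u + -v = u - v := by abel
    refine exists_iso_aux hε hε2 hu hv' ?_ ?_
    · rw [e1]; exact h1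
    · rw [e1, e2]; exact hle

private lemma lower_aux (h : ¬ UniformlyNonSquare X) {η : ℝ} (hη : 0 < η) :
    ∃ x y : X, ‖x‖ = 1 ∧ ‖y‖ = 1 ∧ ‖x + y‖ = ‖x - y‖ ∧
      8 / 5 - η ≤ (‖x + (2 : ℝ) • y‖ ^ 2 + ‖(2 : ℝ) • x + y‖ ^ 2) / (5 * ‖x + y‖ ^ 2) := by
  set ε := min (η / 7) (1 / 4) with hεdef
  have hε : 0 < ε := lt_min (by linarith) (by norm_num)
  have hε4 : ε ≤ 1 / 4 := min_le_right _ _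
  have hεη : 7 * ε ≤ η := by
    have := min_le_left (η / 7) (1 / 4)
    calc 7 * ε ≤ 7 * (η / 7) := by nlinarith
      _ = η := by ring
  rw [UniformlyNonSquare] at h
  push_neg at h
  obtain ⟨u, v, hu, hv, hA, hB⟩ := h (ε / 2) (by linarith) (by linarith)
  have h1 : 2 - ε ≤ ‖u + v‖ := by linarith
  have h2 : 2 - ε ≤ ‖u - v‖ := by linarith
  obtain ⟨w, hw, heq, hge⟩ := exists_iso hε (by linarith) hu hv h1 h2
  set s := ‖u + w‖ with hsdef
  have hs32 : (3 : ℝ) / 2 ≤ s := by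
    have : 2 - 2 * ε ≥ 3 / 2 := by linarith
    linarith
  have hspos : (0 : ℝ) < s := by linarith
  have hsne : s ≠ 0 := ne_of_gt hspos
  have hs2 : s ≤ 2 := by
    calc s ≤ ‖u‖ + ‖w‖ := norm_add_le _ _
      _ = 2 := by rw [hu, hw]; norm_num
  -- norming functional for u + w
  obtain ⟨f, hf1, hf2⟩ := exists_dual_vector ℝ (u + w) (by
    intro h0; rw [hsdef, h0] at hspos; exact lt_irrefl 0 hspos)
  have hfsum : f u + f w = s := by
    rw [← map_add]; exact_mod_cast hf2
  have hfu1 : f u ≤ 1 := by simpa [hu] using dual_apply_le f hf1 u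
  have hfw1 : f w ≤ 1 := by simpa [hw] using dual_apply_le f hf1 w
  have hfu : s - 1 ≤ f u := by linarith
  have hfw : s - 1 ≤ f w := by linarith
  -- norming functional for u - w
  obtain ⟨g, hg1, hg2⟩ := exists_dual_vector ℝ (u - w) (by
    intro h0; rw [h0] at heq; exact hsne heq)
  have hgsub : g u - g w = s := by
    rw [← map_sub, heq]; exact_mod_cast hg2
  have hgu1 : g u ≤ 1 := by simpa [hu] using dual_apply_le g hg1 u
  have hgw1 : -(g w) ≤ 1 := by simpa [hw] using dual_apply_le g hg1 (-w)
  have hgu : s - 1 ≤ g u := by linarith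
  have hgw : s - 1 ≤ -(g w) := by linarith
  -- lower bounds for ‖3u ± w‖
  have ha : 4 * (s - 1) ≤ ‖(3 : ℝ) • u - w‖ := by
    have hval : g ((3 : ℝ) • u - w) = 3 * g u + -(g w) := by
      simp only [map_sub, map_smul, smul_eq_mul]; ring
    have := dual_apply_le g hg1 ((3 : ℝ) • u - w)
    rw [hval] at this
    linarith
  have hb : 4 * (s - 1) ≤ ‖(3 : ℝ) • u + w‖ := by
    have hval : f ((3 : ℝ) • u + w) = 3 * f u + f w := by
      simp only [map_add, map_smul, smul_eq_mul]
    have := dual_apply_le f hf1 ((3 : ℝ) • u + w)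
    rw [hval] at this
    linarith
  -- the admissible pair
  refine ⟨s⁻¹ • (u + w), s⁻¹ • (u - w), ?_, ?_, ?_, ?_⟩
  · rw [norm_smul, Real.norm_eq_abs, abs_of_pos (inv_pos.mpr hspos)]
    exact inv_mul_cancel₀ hsne
  · rw [norm_smul, Real.norm_eq_abs, abs_of_pos (inv_pos.mpr hspos), ← heq]
    exact inv_mul_cancel₀ hsne
  · have e1 : s⁻¹ • (u + w) + s⁻¹ • (u - w) = s⁻¹ • ((2 : ℝ) • u) := by module
    have e2 : s⁻¹ • (u + w) - s⁻¹ • (u - w) = s⁻¹ • ((2 : ℝ) • w) := by module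
    rw [e1, e2, norm_smul, norm_smul, norm_smul, norm_smul, hu, hw]
  · have e1 : s⁻¹ • (u + w) + s⁻¹ • (u - w) = s⁻¹ • ((2 : ℝ) • u) := by module
    have e3 : s⁻¹ • (u + w) + (2 : ℝ) • (s⁻¹ • (u - w)) = s⁻¹ • ((3 : ℝ) • u - w) := by
      module
    have e4 : (2 : ℝ) • (s⁻¹ • (u + w)) + s⁻¹ • (u - w) = s⁻¹ • ((3 : ℝ) • u + w) := by
      module
    rw [e3, e4, e1]
    have hnu : ‖(2 : ℝ) • u‖ = 2 := by
      rw [norm_smul, hu, Real.norm_eq_abs]; norm_num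
    rw [norm_smul, norm_smul, norm_smul, hnu, Real.norm_eq_abs,
      abs_of_pos (inv_pos.mpr hspos)]
    set a := ‖(3 : ℝ) • u - w‖ with hadef
    set b := ‖(3 : ℝ) • u + w‖ with hbdef
    have hinv : (s⁻¹) ^ 2 ≠ 0 := pow_ne_zero 2 (inv_ne_zero hsne)
    have hrw : ((s⁻¹ * a) ^ 2 + (s⁻¹ * b) ^ 2) / (5 * (s⁻¹ * 2) ^ 2)
        = (a ^ 2 + b ^ 2) / 20 := by
      have e5 : ((s⁻¹ * a) ^ 2 + (s⁻¹ * b) ^ 2) = (s⁻¹) ^ 2 * (a ^ 2 + b ^ 2) := by ring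
      have e6 : (5 * (s⁻¹ * 2) ^ 2) = (s⁻¹) ^ 2 * 20 := by ring
      rw [e5, e6, mul_div_mul_left _ _ hinv]
    rw [hrw]
    have hs1 : (1 : ℝ) / 2 ≤ s - 1 := by linarith
    have ha2 : 16 * (s - 1) ^ 2 ≤ a ^ 2 := by
      calc 16 * (s - 1) ^ 2 = (4 * (s - 1)) ^ 2 := by ring
        _ ≤ a ^ 2 := pow_le_pow_left₀ (by linarith) ha 2
    have hb2 : 16 * (s - 1) ^ 2 ≤ b ^ 2 := by
      calc 16 * (s - 1) ^ 2 = (4 * (s - 1)) ^ 2 := by ring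
        _ ≤ b ^ 2 := pow_le_pow_left₀ (by linarith) hb 2
    have hsq : (1 - 2 * ε) ^ 2 ≤ (s - 1) ^ 2 :=
      pow_le_pow_left₀ (by linarith) (by linarith) 2
    rw [le_div_iff₀ (by norm_num : (0 : ℝ) < 20)]
    have hexp : (1 - 2 * ε) ^ 2 = 1 - 4 * ε + 4 * ε ^ 2 := by ring
    linarith [ha2, hb2, hsq, hexp, hεη, hε, sq_nonneg ε]

end Aux

/-- If a real Banach space `X` with `dim X ≥ 2` is not uniformly non-square,
then `Ω(X) = 8/5`. -/
theorem omegaConst_eq_of_not_uniformlyNonSquare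
    {X : Type*} [NormedAddCommGroup X] [NormedSpace ℝ X] [CompleteSpace X]
    (hdim : 2 ≤ Module.rank ℝ X)
    (h : ¬ UniformlyNonSquare X) :
    OmegaConst X = 8 / 5 := by
  rw [OmegaConst]
  set S := { r : ℝ | ∃ x y : X, ‖x‖ = 1 ∧ ‖y‖ = 1 ∧ ‖x + y‖ = ‖x - y‖ ∧
    r = (‖x + (2 : ℝ) • y‖ ^ 2 + ‖(2 : ℝ) • x + y‖ ^ 2) / (5 * ‖x + y‖ ^ 2) } with hS
  have hub : ∀ r ∈ S, r ≤ 8 / 5 := by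
    rintro r ⟨x, y, hx, hy, hxy, rfl⟩
    exact omega_upper x y hx hy hxy
  have hkey : ∀ η : ℝ, 0 < η → ∃ r ∈ S, 8 / 5 - η ≤ r := by
    intro η hη
    obtain ⟨x, y, hx, hy, hxy, hr⟩ := lower_aux h hη
    exact ⟨_, ⟨x, y, hx, hy, hxy, rfl⟩, hr⟩
  have hne : S.Nonempty := by
    obtain ⟨r, hr, _⟩ := hkey 1 one_pos
    exact ⟨r, hr⟩
  have hbdd : BddAbove S := ⟨8 / 5, fun r hr => hub r hr⟩
  apply le_antisymm
  · exact csSup_le hne hub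
  · by_contra hlt
    push_neg at hlt
    obtain ⟨r, hrS, hr⟩ := hkey ((8 / 5 - sSup S) / 2) (by linarith)
    have := le_csSup hbdd hrS
    linarith
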